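/- Let 𝔽 be a finite field of odd characteristic and let D ∈ 𝔽[X] be a monic polynomial of even positive degree that is not the square of a polynomial in 𝔽[X]. Then the polynomial Pell equation for D has a nontrivial solution: there exist p, q ∈ 𝔽[X] with q ≠ 0 such that p² − Dq² is a nonzero constant of 𝔽. (Equivalently, the continued fraction expansion of √D over 𝔽 is periodic and 𝔽(X, √D) contains a nontrivial unit.) -/

import Mathlib

open Polynomial

lemma sqrt_trunc {F : Type*} [Field F] (h2 : (2:F) ≠ 0)
    (D : F[X]) (g : ℕ) (hg : 0 < g) (hD : D.natDegree = 2*g) (hmonic : D.Monic) :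
    ∀ j, j ≤ g → ∃ s : F[X], s.coeff g = 1 ∧ s.natDegree ≤ g ∧
      ∀ i, 2*g - j ≤ i → (s^2 - D).coeff i = 0 := by
  intro j
  induction j with
  | zero =>
    intro _
    refine ⟨X^g, by simp [coeff_X_pow], natDegree_X_pow_le g, ?_⟩
    intro i hi
    rw [← pow_mul]
    rcases eq_or_lt_of_le hi with h | h
    · rw [coeff_sub, coeff_X_pow, ← h]
      have : D.coeff (2*g) = 1 := by
        have := hmonic.coeff_natDegree
        rwa [hD] at this
      simp [this, mul_comm g 2]
    · rw [coeff_sub, coeff_X_pow, coeff_eq_zero_of_natDegree_lt (by omega : D.natDegree < i)]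
      simp; omega
  | succ j ih =>
    intro hj
    obtain ⟨s, hsg, hsdeg, hsc⟩ := ih (by omega)
    set E := s^2 - D with hE
    set e := E.coeff (2*g - j - 1) with he
    set c := -e/2 with hc
    refine ⟨s + C c * X^(g-j-1), ?_, ?_, ?_⟩
    · rw [coeff_add, coeff_C_mul, coeff_X_pow, if_neg (by omega)]
      simp [hsg]
    · refine (natDegree_add_le _ _).trans (max_le hsdeg ?_)
      exact (natDegree_C_mul_le _ _).trans (by rw [natDegree_X_pow]; omega)
    · intro i hi
      have key : (s + C c * X^(g-j-1))^2 - D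
          = E + 2 * C c * (s * X^(g-j-1)) + (C c)^2 * X^(2*(g-j-1)) := by
        rw [hE]; ring
      rw [key, coeff_add, coeff_add]
      have h1 : (2 * C c * (s * X^(g-j-1))).coeff i
          = 2 * c * (if g-j-1 ≤ i then s.coeff (i - (g-j-1)) else 0) := by
        rw [mul_assoc, two_mul, ← add_mul, ← C_add, coeff_C_mul, coeff_mul_X_pow']
        ring_nf
      have h2' : ((C c)^2 * X^(2*(g-j-1))).coeff i = 0 := by
        rw [← C_pow, coeff_C_mul, coeff_X_pow, if_neg (by omega)]
        ring
      rw [h1, h2', if_pos (by omega)]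
      rcases eq_or_lt_of_le hi with h | h
      · have hig : i - (g-j-1) = g := by omega
        rw [hig, hsg, ← h]
        have hce : E.coeff (2*g - (j+1)) = e := by rw [he, Nat.sub_sub]
        have h22 : 2 * c = -e := by rw [hc, mul_comm, div_mul_cancel₀ _ h2]
        rw [hce]
        linear_combination h22
      · rw [hsc i (by omega), coeff_eq_zero_of_natDegree_lt (by omega : s.natDegree < i - (g-j-1))]
        ring

lemma sqrt_trunc2 {F : Type*} [Field F] (h2 : (2:F) ≠ 0)
    (D : F[X]) (g : ℕ) (hg : 0 < g) (hD : D.natDegree = 2*g) (hmonic : D.Monic) :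
    ∀ k, ∃ t : F[X], t.coeff (k+g) = 1 ∧ t.natDegree ≤ k+g ∧
      ∀ i, k+g ≤ i → (t^2 - D*X^(2*k)).coeff i = 0 := by
  intro k
  induction k with
  | zero =>
    obtain ⟨s, h1, h2', h3⟩ := sqrt_trunc h2 D g hg hD hmonic g le_rfl
    refine ⟨s, by simpa using h1, by simpa using h2', ?_⟩
    intro i hi
    simpa using h3 i (by omega)
  | succ k ih =>
    obtain ⟨t, ht1, ht2, ht3⟩ := ih
    set E := t^2 - D*X^(2*k) with hE
    set e := E.coeff (k+g-1) with he
    set c := -e/2 with hc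
    refine ⟨t*X^1 + C c, ?_, ?_, ?_⟩
    · rw [coeff_add, coeff_mul_X_pow', if_pos (by omega), coeff_C, if_neg (by omega)]
      have : k+1+g-1 = k+g := by omega
      rw [this, ht1, add_zero]
    · refine (natDegree_add_le _ _).trans (max_le ?_ ?_)
      · exact (natDegree_mul_le).trans (by rw [natDegree_X_pow]; omega)
      · rw [natDegree_C]; omega
    · intro i hi
      have key : (t*X^1 + C c)^2 - D*X^(2*(k+1))
          = E*X^2 + 2*C c*(t*X^1) + (C c)^2 := by
        rw [hE]; ring
      rw [key, coeff_add, coeff_add, coeff_mul_X_pow', if_pos (by omega),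
        mul_assoc, two_mul, ← add_mul, ← C_add, coeff_C_mul, coeff_mul_X_pow',
        if_pos (by omega), ← C_pow, coeff_C, if_neg (by omega)]
      rcases eq_or_lt_of_le hi with h | h
      · have h1 : i - 2 = k+g-1 := by omega
        have h2'' : i - 1 = k+g := by omega
        rw [h1, h2'', ht1, ← he, mul_one, add_zero]
        have h22 : (c+c) = -e := by rw [hc]; ring_nf; rw [inv_mul_cancel_right₀ h2]
        rw [h22]; ring
      · rw [ht3 (i-2) (by omega), coeff_eq_zero_of_natDegree_lt (by omega : t.natDegree < i - 1)]
        ring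

lemma dirichlet_step {F : Type*} [Field F] [Finite F] (h2 : (2:F) ≠ 0)
    (D : F[X]) (g : ℕ) (hg : 0 < g) (hD : D.natDegree = 2*g) (hmonic : D.Monic)
    (hnsq : ¬ ∃ e : F[X], D = e ^ 2) (m : ℕ) :
    ∃ p q : F[X], q ≠ 0 ∧ q.natDegree ≤ m ∧ m + 1 ≤ q.natDegree + g ∧
      p^2 - D*q^2 ≠ 0 ∧ (p^2 - D*q^2).natDegree < g := by
  classical
  haveI : Fintype F := Fintype.ofFinite F
  set N := 2*m + g with hN
  obtain ⟨t, ht1, ht2, ht3⟩ := sqrt_trunc2 h2 D g hg hD hmonic N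
  set pol : (Fin (m+1) → F) → F[X] := fun c => ∑ i, C (c i) * X^(i:ℕ) with hpol
  have hpolcoeff : ∀ (c : Fin (m+1) → F) (i : Fin (m+1)), (pol c).coeff i = c i := by
    intro c i
    rw [hpol, finset_sum_coeff]
    simp only [coeff_C_mul_X_pow]
    rw [Finset.sum_eq_single i (fun b _ hb => if_neg (fun hh => hb (Fin.ext hh.symm)))
      (by simp), if_pos rfl]
  have hpoldeg : ∀ c, (pol c).natDegree ≤ m := by
    intro c
    refine natDegree_sum_le_of_forall_le _ _ (fun i _ => ?_)
    exact (natDegree_C_mul_le _ _).trans (by rw [natDegree_X_pow]; omega)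
  have hcard : Fintype.card (Fin m → F) < Fintype.card (Fin (m+1) → F) := by
    simp only [Fintype.card_fun, Fintype.card_fin]
    exact Nat.pow_lt_pow_right Fintype.one_lt_card (by omega)
  obtain ⟨c₁, c₂, hcne, hceq⟩ := Fintype.exists_ne_map_eq_of_card_lt
    (fun (c : Fin (m+1) → F) (j : Fin m) => ((pol c) * t).coeff (N - m + j)) hcard
  set q : F[X] := pol c₁ - pol c₂ with hq
  have hq0 : q ≠ 0 := by
    obtain ⟨i, hi⟩ := Function.ne_iff.mp hcne
    intro h0
    apply hi
    have hc : q.coeff i = c₁ i - c₂ i := by rw [hq, coeff_sub, hpolcoeff, hpolcoeff]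
    rw [h0, coeff_zero] at hc
    exact sub_eq_zero.mp hc.symm
  have hqdeg : q.natDegree ≤ m :=
    le_trans (natDegree_sub_le _ _) (max_le (hpoldeg c₁) (hpoldeg c₂))
  have hqt : ∀ i, N - m ≤ i → i < N → (q*t).coeff i = 0 := by
    intro i hi1 hi2
    have hlt : i - (N-m) < m := by omega
    have h := congrFun hceq ⟨i - (N-m), hlt⟩
    simp only at h
    have hj : N - m + (i - (N-m)) = i := by omega
    rw [hj] at h
    rw [hq, sub_mul, coeff_sub, h, sub_self]
  set A := (q*t) %ₘ (X^N) with hA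
  set p := (q*t) /ₘ (X^N) with hp
  have hsplit : A + X^N * p = q*t := modByMonic_add_div (q*t) (X^N)
  have hAe : A = q*t - X^N*p := by rw [← hsplit]; ring
  have hAco : ∀ i, N - m ≤ i → A.coeff i = 0 := by
    intro i hi
    by_cases hiN : i < N
    · rw [hAe, coeff_sub, hqt i hi hiN, X_pow_mul, coeff_mul_X_pow', if_neg (by omega)]
      ring
    · refine coeff_eq_zero_of_degree_lt (lt_of_lt_of_le
        (degree_modByMonic_lt _ (monic_X_pow N)) ?_)
      rw [degree_X_pow]
      exact_mod_cast (by omega : N ≤ i)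
  have hAdeg : A.degree ≤ ((N - m - 1 : ℕ) : WithBot ℕ) := by
    rw [degree_le_iff_coeff_zero]
    intro i hi
    have : N - m - 1 < i := by exact_mod_cast hi
    exact hAco i (by omega)
  have hpdeg : p.natDegree ≤ q.natDegree + g := by
    rw [hp, natDegree_divByMonic _ (monic_X_pow N), natDegree_X_pow]
    have h3 : (q*t).natDegree ≤ q.natDegree + (N + g) :=
      le_trans natDegree_mul_le (by omega)
    omega
  set err := t^2 - D*X^(2*N) with herr
  have herrdeg : err.degree ≤ ((N + g - 1 : ℕ) : WithBot ℕ) := by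
    rw [degree_le_iff_coeff_zero]
    intro i hi
    have : N + g - 1 < i := by exact_mod_cast hi
    exact ht3 i (by omega)
  set R := p^2 - D*q^2 with hR
  set B := X^N*p + q*t with hB
  have hiden : X^(2*N) * R = q^2*err - A*B := by
    rw [hR, herr, hB, hAe]; ring
  have hR0 : R ≠ 0 := by
    intro h0
    have hpq : p^2 = D*q^2 := sub_eq_zero.mp h0
    have hdvd : q ∣ p := by
      rw [← IsIntegrallyClosed.pow_dvd_pow_iff (two_ne_zero)]
      exact ⟨D, by rw [hpq]; ring⟩
    obtain ⟨u, hu⟩ := hdvd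
    refine hnsq ⟨u, ?_⟩
    have hcalc : q^2*D = q^2*u^2 := by
      calc q^2*D = D*q^2 := by ring
        _ = p^2 := hpq.symm
        _ = q^2*u^2 := by rw [hu]; ring
    exact mul_left_cancel₀ (pow_ne_zero 2 hq0) hcalc
  have hq2deg : (q^2 : F[X]).degree ≤ ((2*m : ℕ) : WithBot ℕ) :=
    natDegree_le_iff_degree_le.mp (le_trans natDegree_pow_le (by omega))
  have hq2err : (q^2*err).degree ≤ ((2*m + (N+g-1) : ℕ) : WithBot ℕ) := by
    refine le_trans (degree_mul_le _ _) ?_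
    rw [Nat.cast_add]
    exact add_le_add hq2deg herrdeg
  have hBdeg : B.degree ≤ ((N + q.natDegree + g : ℕ) : WithBot ℕ) := by
    refine natDegree_le_iff_degree_le.mp ?_
    refine le_trans (natDegree_add_le _ _) (max_le ?_ ?_)
    · refine le_trans natDegree_mul_le ?_
      rw [natDegree_X_pow]; omega
    · refine le_trans natDegree_mul_le (by omega)
  have hXR : (X^(2*N) * R).degree ≤ ((2*N + g - 1 : ℕ) : WithBot ℕ) := by
    rw [hiden]
    refine le_trans (degree_sub_le _ _) (max_le ?_ ?_)
    · refine le_trans hq2err ?_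
      exact_mod_cast (by omega : 2*m + (N+g-1) ≤ 2*N + g - 1)
    · refine le_trans (degree_mul_le _ _) ?_
      refine le_trans (add_le_add hAdeg hBdeg) ?_
      rw [← Nat.cast_add]
      exact_mod_cast (by omega : (N-m-1) + (N + q.natDegree + g) ≤ 2*N + g - 1)
  have hRnd : R.natDegree < g := by
    have h1 : (X^(2*N)*R).natDegree = 2*N + R.natDegree := by
      rw [natDegree_mul (pow_ne_zero _ X_ne_zero) hR0, natDegree_X_pow]
    have h2' : (X^(2*N)*R).natDegree ≤ 2*N + g - 1 := natDegree_le_iff_degree_le.mpr hXR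
    omega
  -- lower bound on deg q
  have hABd : A*B = q^2*err - X^(2*N)*R := by linear_combination hiden
  have hXRdeg_eq : (X^(2*N)*R).degree = ((2*N + R.natDegree : ℕ) : WithBot ℕ) := by
    rw [degree_mul, degree_X_pow, degree_eq_natDegree hR0]
    exact (Nat.cast_add _ _).symm
  have hlt2 : (q^2*err).degree < (X^(2*N)*R).degree := by
    refine lt_of_le_of_lt hq2err ?_
    rw [hXRdeg_eq]
    exact_mod_cast (by omega : 2*m + (N+g-1) < 2*N + R.natDegree)
  have hABdeg : (A*B).degree = ((2*N + R.natDegree : ℕ) : WithBot ℕ) := by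
    rw [hABd, degree_sub_eq_right_of_degree_lt hlt2, hXRdeg_eq]
  have hup : (A*B).degree ≤ (((N-m-1) + (N + q.natDegree + g) : ℕ) : WithBot ℕ) := by
    refine le_trans (degree_mul_le _ _) ?_
    rw [Nat.cast_add]
    exact add_le_add hAdeg hBdeg
  have hfin : 2*N + R.natDegree ≤ (N-m-1) + (N + q.natDegree + g) := by
    have := hABdeg ▸ hup
    exact_mod_cast this
  exact ⟨p, q, hq0, hqdeg, by omega, hR0, hRnd⟩

lemma eq_of_lowcoeff {F : Type*} [Semiring F] {g : ℕ} {a b : F[X]}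
    (ha : a.degree < (g:ℕ)) (hb : b.degree < (g:ℕ))
    (h : ∀ i : Fin g, a.coeff i = b.coeff i) : a = b := by
  ext i
  by_cases hig : i < g
  · exact h ⟨i, hig⟩
  · rw [coeff_eq_zero_of_degree_lt (lt_of_lt_of_le ha (by exact_mod_cast (by omega : g ≤ i))),
      coeff_eq_zero_of_degree_lt (lt_of_lt_of_le hb (by exact_mod_cast (by omega : g ≤ i)))]

theorem polynomial_pell_finite_field
    {F : Type*} [Field F] [Finite F] (hchar : ringChar F ≠ 2)
    (D : F[X]) (hmonic : D.Monic) (hpos : 0 < D.natDegree) (heven : Even D.natDegree)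
    (hnsq : ¬ ∃ e : F[X], D = e ^ 2) :
    ∃ p q : F[X], q ≠ 0 ∧ ∃ κ : F, κ ≠ 0 ∧ p ^ 2 - D * q ^ 2 = Polynomial.C κ := by
  classical
  have h2 : (2:F) ≠ 0 := Ring.two_ne_zero hchar
  obtain ⟨g, hgg⟩ := heven
  have hD : D.natDegree = 2*g := by omega
  have hg : 0 < g := by omega
  have hex : ∀ k : ℕ, ∃ p q : F[X], q ≠ 0 ∧ q.natDegree ≤ g*k ∧
      g*k + 1 ≤ q.natDegree + g ∧ p^2 - D*q^2 ≠ 0 ∧ (p^2 - D*q^2).natDegree < g :=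
    fun k => dirichlet_step h2 D g hg hD hmonic hnsq (g*k)
  choose pf qf hq0 hqle hqge hR0 hRlt using hex
  -- degrees of qf are strictly increasing
  have hmono : ∀ k₁ k₂ : ℕ, k₁ < k₂ → (qf k₁).natDegree < (qf k₂).natDegree := by
    intro k₁ k₂ hk
    have hmul : g*k₁ + g ≤ g*k₂ := by
      calc g*k₁ + g = g*(k₁+1) := by ring
        _ ≤ g*k₂ := Nat.mul_le_mul_left _ (by omega)
    have h1 := hqle k₁
    have h2' := hqge k₂
    linarith
  set r : ℕ → F[X] := fun k => pf k^2 - D*(qf k)^2 with hrdef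
  set w : ℕ → F[X] := fun k => r k * C ((r k).leadingCoeff⁻¹) with hwdef
  have hwmonic : ∀ k, (w k).Monic := fun k => monic_mul_leadingCoeff_inv (hR0 k)
  have hrw : ∀ k, (w k).degree = (r k).degree := fun k => degree_mul_leadingCoeff_inv _ (hR0 k)
  have hrdeg : ∀ k, (r k).degree < (g : ℕ) :=
    fun k => lt_of_le_of_lt degree_le_natDegree (by exact_mod_cast hRlt k)
  have hmoddeg : ∀ k (x : F[X]), (x %ₘ w k).degree < (g : ℕ) := by
    intro k x
    refine lt_trans ?_ (hrdeg k)
    rw [← hrw k]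
    exact degree_modByMonic_lt _ (hwmonic k)
  -- pigeonhole
  obtain ⟨k₁, k₂, hkne, hkeq⟩ := Finite.exists_ne_map_eq_of_infinite
    (fun k : ℕ => ((fun i : Fin g => (r k).coeff i),
      (fun i : Fin g => ((pf k) %ₘ w k).coeff i),
      (fun i : Fin g => ((qf k) %ₘ w k).coeff i)))
  simp only [Prod.mk.injEq] at hkeq
  obtain ⟨hkeq1, hkeq2, hkeq3⟩ := hkeq
  have hreq : r k₁ = r k₂ :=
    eq_of_lowcoeff (hrdeg k₁) (hrdeg k₂) (fun i => congrFun hkeq1 i)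
  have hweq : w k₁ = w k₂ := by rw [hwdef]; simp only; rw [hreq]
  have hpeq : (pf k₁) %ₘ w k₁ = (pf k₂) %ₘ w k₁ := by
    rw [hweq]
    rw [hweq] at hkeq2
    exact eq_of_lowcoeff (hmoddeg k₂ _) (hmoddeg k₂ _) (fun i => congrFun hkeq2 i)
  have hqeq : (qf k₁) %ₘ w k₁ = (qf k₂) %ₘ w k₁ := by
    rw [hweq]
    rw [hweq] at hkeq3
    exact eq_of_lowcoeff (hmoddeg k₂ _) (hmoddeg k₂ _) (fun i => congrFun hkeq3 i)
  -- divisibility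
  have hdvdw : ∀ x y : F[X], x %ₘ w k₁ = y %ₘ w k₁ → r k₁ ∣ x - y := by
    intro x y hxy
    refine dvd_trans (dvd_mul_right (r k₁) (C ((r k₁).leadingCoeff⁻¹))) ?_
    refine ⟨(x /ₘ w k₁) - (y /ₘ w k₁), ?_⟩
    have e1 := modByMonic_add_div x (w k₁)
    have e2 := modByMonic_add_div y (w k₁)
    linear_combination (-(1:F[X]))*e1 + e2 + hxy
  obtain ⟨a, ha⟩ := hdvdw _ _ hpeq
  obtain ⟨b, hb⟩ := hdvdw _ _ hqeq
  -- composition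
  set p₁ := pf k₁; set p₂ := pf k₂; set q₁ := qf k₁; set q₂ := qf k₂
  set ρ := r k₁ with hρ
  have h₁ : p₁^2 - D*q₁^2 = ρ := rfl
  have h₂ : p₂^2 - D*q₂^2 = ρ := by rw [hreq]
  have hρ0 : ρ ≠ 0 := hR0 k₁
  set P' : F[X] := 1 - a*p₁ + D*b*q₁ with hP'
  set Q' : F[X] := a*q₁ - b*p₁ with hQ'
  have hPeq : p₁*p₂ - D*q₁*q₂ = ρ * P' := by
    rw [hP']
    linear_combination (-p₁)*ha + (D*q₁)*hb + h₁
  have hQeq : p₁*q₂ - p₂*q₁ = ρ * Q' := by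
    rw [hQ']
    linear_combination q₁*ha - p₁*hb
  have hQ'0 : Q' ≠ 0 := by
    intro h0
    have hQ0 : p₁*q₂ - p₂*q₁ = 0 := by rw [hQeq, h0, mul_zero]
    have hzz : ρ*(q₂^2 - q₁^2) = 0 := by
      linear_combination (-(q₂^2))*h₁ + q₁^2*h₂ + (p₁*q₂+p₂*q₁)*hQ0
    have : q₂^2 = q₁^2 := by
      have := (mul_eq_zero.mp hzz).resolve_left hρ0
      linear_combination this
    have hnd : (q₂^2).natDegree = (q₁^2).natDegree := by rw [this]
    rw [natDegree_pow, natDegree_pow] at hnd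
    have e1 : (qf k₁).natDegree = q₁.natDegree := rfl
    have e2 : (qf k₂).natDegree = q₂.natDegree := rfl
    rcases lt_trichotomy k₁ k₂ with h | h | h
    · have := hmono k₁ k₂ h; omega
    · exact hkne h
    · have := hmono k₂ k₁ h; omega
  have hPQ : (p₁*p₂ - D*q₁*q₂)^2 - D*(p₁*q₂ - p₂*q₁)^2 = ρ^2 := by
    linear_combination (p₂^2 - D*q₂^2)*h₁ + ρ*h₂
  have hfinal : ρ^2 * (P'^2 - D*Q'^2) = ρ^2 * 1 := by
    linear_combination hPQ - ((p₁*p₂ - D*q₁*q₂) + ρ*P')*hPeq + D*((p₁*q₂ - p₂*q₁) + ρ*Q')*hQeq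
  have hfin : P'^2 - D*Q'^2 = 1 := mul_left_cancel₀ (pow_ne_zero 2 hρ0) hfinal
  exact ⟨P', Q', hQ'0, 1, one_ne_zero, by rw [map_one]; exact hfin⟩
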